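/- Define S(ξ) = Σ_I κ_I C(Ī I|0)₂₃ (e_I ⊗ ξ ⊗ e_Ī) C(I Ī|0)₁₂* on G*. Assuming C(Ī I|0)₂₃ C(I Ī|0)₁₂* = κ_I⁻¹ e_I with κ_I real, S is an anti-homomorphism: S(ξη) = S(η)S(ξ), and it satisfies Σσ S(ξ¹σ)ξ²σ = ε(ξ)e = Σσ ξ¹σ S(ξ²σ) where Δ(ξ) = Σ ξ¹σ⊗ξ²σ (i.e. the antipode relations hold with α = β = e). -/
import Mathlib


open TensorProduct Module

noncomputable section

variable {ι : Type*} [Fintype ι] [DecidableEq ι]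
variable {V : ι → Type*} [∀ i, AddCommGroup (V i)] [∀ i, Module ℂ (V i)]

/-- The "cup" element `b_I = C(I Ī|0)*(e₀) ∈ Vᴵ ⊗ V^Ī`. -/
def cupElt {N : ι → ι → ι → ℕ} (z : ι) (u : V z ≃ₗ[ℂ] ℂ) (conj : ι → ι)
    (D : ∀ I J K : ι, Fin (N I J K) → (V K →ₗ[ℂ] V I ⊗[ℂ] V J))
    (I : ι) (hcup : 0 < N I (conj I) z) : V I ⊗[ℂ] V (conj I) :=
  D I (conj I) z ⟨0, hcup⟩ (u.symm 1)

/-- Insertion `v ↦ b_I ⊗ v` (re-associated): `Vᴵ → Vᴵ ⊗ (V^Ī ⊗ Vᴵ)`. -/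
def insMap {N : ι → ι → ι → ℕ} (z : ι) (u : V z ≃ₗ[ℂ] ℂ) (conj : ι → ι)
    (D : ∀ I J K : ι, Fin (N I J K) → (V K →ₗ[ℂ] V I ⊗[ℂ] V J))
    (I : ι) (hcup : 0 < N I (conj I) z) :
    V I →ₗ[ℂ] V I ⊗[ℂ] (V (conj I) ⊗[ℂ] V I) :=
  (TensorProduct.assoc ℂ (V I) (V (conj I)) (V I)).toLinearMap ∘ₗ
    (TensorProduct.mk ℂ (V I ⊗[ℂ] V (conj I)) (V I)) (cupElt z u conj D I hcup)

/-- Contraction with the "cap" `C(Ī I|0)` in the last two slots: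
`Vᴵ ⊗ (V^Ī ⊗ Vᴵ) → Vᴵ`. -/
def contrMap {N : ι → ι → ι → ℕ} (z : ι) (u : V z ≃ₗ[ℂ] ℂ) (conj : ι → ι)
    (C : ∀ I J K : ι, Fin (N I J K) → (V I ⊗[ℂ] V J →ₗ[ℂ] V K))
    (I : ι) (hcap : 0 < N (conj I) I z) :
    V I ⊗[ℂ] (V (conj I) ⊗[ℂ] V I) →ₗ[ℂ] V I :=
  (TensorProduct.rid ℂ (V I)).toLinearMap ∘ₗ
    TensorProduct.map LinearMap.id (u.toLinearMap ∘ₗ C (conj I) I z ⟨0, hcap⟩)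

/-- The antipode `S(ξ) = Σ_I κ_I C(Ī I|0)₂₃ (e_I ⊗ ξ ⊗ e_Ī) C(I Ī|0)₁₂*`,
acting on `Vᴵ` by `v ↦ κ_I (id ⊗ C(Ī I|0))((1 ⊗ ξ_Ī ⊗ 1)(b_I ⊗ v))`. -/
def antipodeS {N : ι → ι → ι → ℕ} (z : ι) (u : V z ≃ₗ[ℂ] ℂ) (conj : ι → ι)
    (κ : ι → ℝ)
    (C : ∀ I J K : ι, Fin (N I J K) → (V I ⊗[ℂ] V J →ₗ[ℂ] V K))
    (D : ∀ I J K : ι, Fin (N I J K) → (V K →ₗ[ℂ] V I ⊗[ℂ] V J))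
    (hcap : ∀ I, 0 < N (conj I) I z) (hcup : ∀ I, 0 < N I (conj I) z)
    (ξ : ∀ i, Module.End ℂ (V i)) : ∀ i, Module.End ℂ (V i) :=
  fun I => (κ I : ℂ) •
    (contrMap z u conj C I (hcap I) ∘ₗ
      TensorProduct.map LinearMap.id (TensorProduct.map (ξ (conj I)) LinearMap.id) ∘ₗ
      insMap z u conj D I (hcup I))

/-- The componentwise coproduct `Δ(ξ)` on `Vᴵ ⊗ Vᴶ`. -/
def coprodComp {N : ι → ι → ι → ℕ}
    (C : ∀ I J K : ι, Fin (N I J K) → (V I ⊗[ℂ] V J →ₗ[ℂ] V K))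
    (D : ∀ I J K : ι, Fin (N I J K) → (V K →ₗ[ℂ] V I ⊗[ℂ] V J))
    (ξ : ∀ i, Module.End ℂ (V i)) (I J : ι) :
    Module.End ℂ (V I ⊗[ℂ] V J) :=
  ∑ K, ∑ a, D I J K a ∘ₗ ξ K ∘ₗ C I J K a


section SnakeAux
variable {A B : Type*} [AddCommGroup A] [Module ℂ A] [AddCommGroup B] [Module ℂ B]

/-- Contraction of a finite family against a functional. -/
def gMapAux {γ : Type*} (s : Finset γ) (p : γ → A) (q : γ → B) :
    Module.Dual ℂ A →ₗ[ℂ] B where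
  toFun l := ∑ i ∈ s, l (p i) • q i
  map_add' l₁ l₂ := by simp [add_smul, Finset.sum_add_distrib]
  map_smul' c l := by simp [Finset.smul_sum, mul_smul]

lemma findim_of_snakeAux {γ : Type*} (cap : B ⊗[ℂ] A →ₗ[ℂ] ℂ) (s : Finset γ)
    (p : γ → A) (q : γ → B) (c : ℂ) (hc : c ≠ 0)
    (h1 : ∀ v : A, ∑ i ∈ s, cap (q i ⊗ₜ[ℂ] v) • p i = c • v) :
    FiniteDimensional ℂ A := by
  classical
  refine ⟨⟨s.image p, ?_⟩⟩
  rw [eq_top_iff]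
  intro v _
  have hv : v = c⁻¹ • ∑ i ∈ s, cap (q i ⊗ₜ[ℂ] v) • p i := by
    rw [h1 v, smul_smul, inv_mul_cancel₀ hc, one_smul]
  rw [hv]
  refine Submodule.smul_mem _ _ (Submodule.sum_mem _ fun i hi => Submodule.smul_mem _ _ ?_)
  exact Submodule.subset_span (Finset.mem_coe.2 (Finset.mem_image_of_mem p hi))

lemma snake_flipAux {γ δ : Type*} (cap : B ⊗[ℂ] A →ₗ[ℂ] ℂ) (s : Finset γ)
    (p : γ → A) (q : γ → B) (c : ℂ) (hc : c ≠ 0)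
    (h1 : ∀ v : A, ∑ i ∈ s, cap (q i ⊗ₜ[ℂ] v) • p i = c • v)
    (cap' : A ⊗[ℂ] B →ₗ[ℂ] ℂ) (t : Finset δ)
    (p' : δ → B) (q' : δ → A) (c' : ℂ) (hc' : c' ≠ 0)
    (h1' : ∀ w : B, ∑ j ∈ t, cap' (q' j ⊗ₜ[ℂ] w) • p' j = c' • w) :
    ∀ w : B, ∑ i ∈ s, cap (w ⊗ₜ[ℂ] p i) • q i = c • w := by
  have hA : FiniteDimensional ℂ A := findim_of_snakeAux cap s p q c hc h1
  have hB : FiniteDimensional ℂ B := findim_of_snakeAux cap' t p' q' c' hc' h1'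
  set f : B →ₗ[ℂ] Module.Dual ℂ A := TensorProduct.curry cap with hfdef
  set g : Module.Dual ℂ A →ₗ[ℂ] B := gMapAux s p q with hgdef
  set f' : A →ₗ[ℂ] Module.Dual ℂ B := TensorProduct.curry cap' with hf'def
  set g' : Module.Dual ℂ B →ₗ[ℂ] A := gMapAux t p' q' with hg'def
  have hfg : ∀ l : Module.Dual ℂ A, f (g l) = c • l := by
    intro l
    ext v
    have h := congrArg l (h1 v)
    simp only [map_sum, map_smul, smul_eq_mul] at h
    simpa [hfdef, hgdef, gMapAux, TensorProduct.sum_tmul, TensorProduct.smul_tmul',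
      smul_eq_mul, mul_comm] using h
  have hfg' : ∀ l : Module.Dual ℂ B, f' (g' l) = c' • l := by
    intro l
    ext w
    have h := congrArg l (h1' w)
    simp only [map_sum, map_smul, smul_eq_mul] at h
    simpa [hf'def, hg'def, gMapAux, TensorProduct.sum_tmul, TensorProduct.smul_tmul',
      smul_eq_mul, mul_comm] using h
  have hginj : Function.Injective g := by
    intro l₁ l₂ h
    have : c • l₁ = c • l₂ := by rw [← hfg l₁, ← hfg l₂, h]
    exact smul_right_injective _ hc this
  have hg'inj : Function.Injective g' := by
    intro l₁ l₂ h
    have : c' • l₁ = c' • l₂ := by rw [← hfg' l₁, ← hfg' l₂, h]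
    exact smul_right_injective _ hc' this
  have hd1 : finrank ℂ (Module.Dual ℂ A) ≤ finrank ℂ B :=
    LinearMap.finrank_le_finrank_of_injective hginj
  have hd2 : finrank ℂ (Module.Dual ℂ B) ≤ finrank ℂ A :=
    LinearMap.finrank_le_finrank_of_injective hg'inj
  have e1 : finrank ℂ (Module.Dual ℂ A) = finrank ℂ A := Subspace.dual_finrank_eq
  have e2 : finrank ℂ (Module.Dual ℂ B) = finrank ℂ B := Subspace.dual_finrank_eq
  have hrank : finrank ℂ (Module.Dual ℂ A) = finrank ℂ B := by omega
  have hgsurj : Function.Surjective g :=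
    (LinearMap.injective_iff_surjective_of_finrank_eq_finrank hrank).1 hginj
  intro w
  obtain ⟨l, hl⟩ := hgsurj w
  have key : g (f w) = c • w := by
    rw [← hl, hfg l, map_smul]
  calc ∑ i ∈ s, cap (w ⊗ₜ[ℂ] p i) • q i = g (f w) := by
        simp [hgdef, hfdef, gMapAux, TensorProduct.curry_apply]
  _ = c • w := key

end SnakeAux

def castE {a b : ι} (h : a = b) : V a ≃ₗ[ℂ] V b := by
  subst h; exact LinearEquiv.refl ℂ (V a)

/-- Define
`S(ξ) = Σ_I κ_I C(Ī I|0)₂₃ (e_I ⊗ ξ ⊗ e_Ī) C(I Ī|0)₁₂*` on `G* = Π I, End Vᴵ`.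
Assuming `C(Ī I|0)₂₃ C(I Ī|0)₁₂* = κ_I⁻¹ e_I` with `κ_I` real, `S` is an
anti-homomorphism `S(ξη) = S(η)S(ξ)` and satisfies the antipode relations
`Σσ S(ξ¹σ)ξ²σ = ε(ξ)e = Σσ ξ¹σ S(ξ²σ)` (with `α = β = e`), where
`Δ(ξ) = Σ ξ¹σ ⊗ ξ²σ` and `ε(ξ) = ⟨e₀|ξ|e₀⟩`.  The antipode relations are
expressed componentwise: on `Vᴶ` only the `(J̄,J)`- resp. `(J,J̄)`-component of
`Δ(ξ)` contributes, contracted with cup and cap. -/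
theorem clebsch_gordan_antipode
    (z : ι) (u : V z ≃ₗ[ℂ] ℂ) (conj : ι → ι) (κ : ι → ℝ)
    (hconj : Function.Involutive conj)
    (hκ : ∀ I, κ I ≠ 0)
    (N : ι → ι → ι → ℕ)
    (C : ∀ I J K : ι, Fin (N I J K) → (V I ⊗[ℂ] V J →ₗ[ℂ] V K))
    (D : ∀ I J K : ι, Fin (N I J K) → (V K →ₗ[ℂ] V I ⊗[ℂ] V J))
    (hcap : ∀ I, 0 < N (conj I) I z) (hcup : ∀ I, 0 < N I (conj I) z)
    -- orthonormality of the Clebsch–Gordan maps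
    (h1 : ∀ (I J K : ι) (a b : Fin (N I J K)),
      C I J K a ∘ₗ D I J K b = if a = b then LinearMap.id else 0)
    (h2 : ∀ (I J K L : ι) (a : Fin (N I J K)) (b : Fin (N I J L)),
      K ≠ L → C I J K a ∘ₗ D I J L b = 0)
    -- completeness
    (hcompl : ∀ I J : ι, (∑ K, ∑ a, D I J K a ∘ₗ C I J K a) = LinearMap.id)
    -- normalization `C(I0|I) = e_I = C(0I|I)`
    (hNl : ∀ J K : ι, K ≠ J → N z J K = 0)
    (hNr : ∀ J K : ι, K ≠ J → N J z K = 0)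
    (hCl : ∀ (J : ι) (a : Fin (N z J J)) (c : V z) (v : V J),
      C z J J a (c ⊗ₜ[ℂ] v) = u c • v)
    (hDl : ∀ (J : ι) (a : Fin (N z J J)) (v : V J),
      D z J J a v = (u.symm 1) ⊗ₜ[ℂ] v)
    (hCr : ∀ (J : ι) (a : Fin (N J z J)) (v : V J) (c : V z),
      C J z J a (v ⊗ₜ[ℂ] c) = u c • v)
    (hDr : ∀ (J : ι) (a : Fin (N J z J)) (v : V J),
      D J z J a v = v ⊗ₜ[ℂ] (u.symm 1))
    -- the conjugation condition `C(Ī I|0)₂₃ C(I Ī|0)₁₂* = κ_I⁻¹ e_I`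
    (hcc : ∀ I, contrMap z u conj C I (hcap I) ∘ₗ insMap z u conj D I (hcup I)
      = ((κ I : ℂ))⁻¹ • LinearMap.id) :
    -- S is an anti-homomorphism
    (∀ ξ η : ∀ i, Module.End ℂ (V i),
      antipodeS z u conj κ C D hcap hcup (ξ * η) =
        antipodeS z u conj κ C D hcap hcup η *
        antipodeS z u conj κ C D hcap hcup ξ) ∧
    -- `Σσ S(ξ¹σ) ξ²σ = ε(ξ) e`, componentwise on `Vᴶ`
    (∀ (ξ : ∀ i, Module.End ℂ (V i)) (J : ι),
      (κ J : ℂ) •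
        (contrMap z u conj C J (hcap J) ∘ₗ
          TensorProduct.map LinearMap.id (coprodComp C D ξ (conj J) J) ∘ₗ
          insMap z u conj D J (hcup J))
        = (u (ξ z (u.symm 1))) • (LinearMap.id : Module.End ℂ (V J))) ∧
    -- `Σσ ξ¹σ S(ξ²σ) = ε(ξ) e`, componentwise on `Vᴶ`
    (∀ (ξ : ∀ i, Module.End ℂ (V i)) (J : ι),
      (κ J : ℂ) •
        ((TensorProduct.rid ℂ (V J)).toLinearMap ∘ₗ
          TensorProduct.map LinearMap.id
            (u.toLinearMap ∘ₗ C (conj J) J z ⟨0, hcap J⟩) ∘ₗ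
          (TensorProduct.assoc ℂ (V J) (V (conj J)) (V J)).toLinearMap ∘ₗ
          TensorProduct.map (coprodComp C D ξ J (conj J)) LinearMap.id ∘ₗ
          (TensorProduct.mk ℂ (V J ⊗[ℂ] V (conj J)) (V J)) (cupElt z u conj D J (hcup J)))
        = (u (ξ z (u.symm 1))) • (LinearMap.id : Module.End ℂ (V J))) := by
  classical
  have hκC : ∀ I, ((κ I : ℂ)) ≠ 0 := fun I => Complex.ofReal_ne_zero.2 (hκ I)
  -- representations of the cup elements
  choose srep hsrep using fun I => TensorProduct.exists_finset (R := ℂ) (cupElt z u conj D I (hcup I))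
  -- evaluation of the basic composite
  have Tval' : ∀ (I : ι) (F : Module.End ℂ (V (conj I) ⊗[ℂ] V I)) (v : V I),
      (contrMap z u conj C I (hcap I) ∘ₗ
        TensorProduct.map LinearMap.id F ∘ₗ insMap z u conj D I (hcup I)) v
      = ∑ x ∈ srep I, u (C (conj I) I z ⟨0, hcap I⟩ (F (x.2 ⊗ₜ[ℂ] v))) • x.1 := by
    intro I F v
    simp [contrMap, insMap, hsrep I, TensorProduct.sum_tmul, TensorProduct.assoc_tmul,
      TensorProduct.map_tmul, TensorProduct.rid_tmul, map_sum]
  have Tval : ∀ (I : ι) (f : Module.End ℂ (V (conj I))) (v : V I),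
      (contrMap z u conj C I (hcap I) ∘ₗ
        TensorProduct.map LinearMap.id (TensorProduct.map f LinearMap.id) ∘ₗ
        insMap z u conj D I (hcup I)) v
      = ∑ x ∈ srep I, u (C (conj I) I z ⟨0, hcap I⟩ (f x.2 ⊗ₜ[ℂ] v)) • x.1 := by
    intro I f v
    rw [Tval' I (TensorProduct.map f LinearMap.id) v]
    simp [TensorProduct.map_tmul]
  -- the snake identity (from `hcc`)
  have snake1 : ∀ (I : ι) (v : V I),
      ∑ x ∈ srep I, u (C (conj I) I z ⟨0, hcap I⟩ (x.2 ⊗ₜ[ℂ] v)) • x.1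
        = ((κ I : ℂ))⁻¹ • v := by
    intro I v
    have h := LinearMap.congr_fun (hcc I) v
    have h2 := Tval' I LinearMap.id v
    simp only [TensorProduct.map_id, LinearMap.id_comp, LinearMap.id_apply] at h2 ⊢
    rw [← h2]
    simpa using h
  -- the flipped snake identity
  have snake2 : ∀ (I : ι) (w : V (conj I)),
      ∑ x ∈ srep I, u (C (conj I) I z ⟨0, hcap I⟩ (w ⊗ₜ[ℂ] x.1)) • x.2
        = ((κ I : ℂ))⁻¹ • w := by
    intro I
    have e : V (conj (conj I)) ≃ₗ[ℂ] V I := castE (hconj I)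
    have h1' : ∀ w : V (conj I),
        ∑ y ∈ srep (conj I),
          ((u.toLinearMap ∘ₗ C (conj (conj I)) (conj I) z ⟨0, hcap (conj I)⟩) ∘ₗ
            TensorProduct.map e.symm.toLinearMap LinearMap.id) ((e y.2) ⊗ₜ[ℂ] w) • y.1
          = ((κ (conj I) : ℂ))⁻¹ • w := by
      intro w
      have h := snake1 (conj I) w
      simpa [TensorProduct.map_tmul] using h
    intro w
    have h := snake_flipAux
      (u.toLinearMap ∘ₗ C (conj I) I z ⟨0, hcap I⟩) (srep I) Prod.fst Prod.snd
      ((κ I : ℂ))⁻¹ (inv_ne_zero (hκC I))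
      (fun v => by simpa using snake1 I v)
      (((u.toLinearMap ∘ₗ C (conj (conj I)) (conj I) z ⟨0, hcap (conj I)⟩) ∘ₗ
          TensorProduct.map e.symm.toLinearMap LinearMap.id))
      (srep (conj I)) Prod.fst (fun y => e y.2)
      ((κ (conj I) : ℂ))⁻¹ (inv_ne_zero (hκC (conj I))) h1' w
    simpa using h
  -- collapse lemmas from orthonormality
  have collapse1 : ∀ (A B : ι) (h0 : 0 < N A B z) (ζ : ∀ i, Module.End ℂ (V i))
      (w : V A ⊗[ℂ] V B),
      C A B z ⟨0, h0⟩ (coprodComp C D ζ A B w) = ζ z (C A B z ⟨0, h0⟩ w) := by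
    intro A B h0 ζ w
    simp only [coprodComp, LinearMap.sum_apply, LinearMap.comp_apply, map_sum]
    rw [Finset.sum_eq_single z (fun K _ hK => Finset.sum_eq_zero fun a _ => by
        simpa using LinearMap.congr_fun (h2 A B z K ⟨0, h0⟩ a (Ne.symm hK)) (ζ K (C A B K a w)))
      (fun h => absurd (Finset.mem_univ z) h)]
    rw [Finset.sum_eq_single (⟨0, h0⟩ : Fin (N A B z)) (fun a _ ha => by
        have h := h1 A B z ⟨0, h0⟩ a
        rw [if_neg (fun hh => ha hh.symm)] at h
        simpa using LinearMap.congr_fun h (ζ z (C A B z a w)))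
      (fun h => absurd (Finset.mem_univ _) h)]
    have h := h1 A B z ⟨0, h0⟩ ⟨0, h0⟩
    rw [if_pos rfl] at h
    simpa using LinearMap.congr_fun h (ζ z (C A B z ⟨0, h0⟩ w))
  have collapse2 : ∀ (A B : ι) (h0 : 0 < N A B z) (ζ : ∀ i, Module.End ℂ (V i))
      (w : V z),
      coprodComp C D ζ A B (D A B z ⟨0, h0⟩ w) = D A B z ⟨0, h0⟩ (ζ z w) := by
    intro A B h0 ζ w
    simp only [coprodComp, LinearMap.sum_apply, LinearMap.comp_apply]
    rw [Finset.sum_eq_single z (fun K _ hK => Finset.sum_eq_zero fun a _ => by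
        have h := LinearMap.congr_fun (h2 A B K z a ⟨0, h0⟩ hK) w
        simp only [LinearMap.comp_apply, LinearMap.zero_apply] at h
        rw [h]; simp)
      (fun h => absurd (Finset.mem_univ _) h)]
    rw [Finset.sum_eq_single (⟨0, h0⟩ : Fin (N A B z)) (fun a _ ha => by
        have h := h1 A B z a ⟨0, h0⟩
        rw [if_neg ha] at h
        have h' := LinearMap.congr_fun h w
        simp only [LinearMap.comp_apply, LinearMap.zero_apply] at h'
        rw [h']; simp)
      (fun h => absurd (Finset.mem_univ _) h)]
    have h := LinearMap.congr_fun (h1 A B z ⟨0, h0⟩ ⟨0, h0⟩) w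
    rw [if_pos rfl] at h
    simp only [LinearMap.comp_apply, LinearMap.id_apply] at h
    rw [h]
  -- scalar structure of V z
  have hw : ∀ w : V z, w = u w • u.symm 1 := by
    intro w
    have h : u.symm (u w • (1 : ℂ)) = u w • u.symm 1 := map_smul _ _ _
    rw [← h, smul_eq_mul, mul_one, LinearEquiv.symm_apply_apply]
  refine ⟨?_, ?_, ?_⟩
  · -- anti-homomorphism
    intro ξ η
    funext I
    have key : ∀ f g : Module.End ℂ (V (conj I)),
        (contrMap z u conj C I (hcap I) ∘ₗ
          TensorProduct.map LinearMap.id (TensorProduct.map g LinearMap.id) ∘ₗ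
          insMap z u conj D I (hcup I)) ∘ₗ
        (contrMap z u conj C I (hcap I) ∘ₗ
          TensorProduct.map LinearMap.id (TensorProduct.map f LinearMap.id) ∘ₗ
          insMap z u conj D I (hcup I))
        = ((κ I : ℂ))⁻¹ •
          (contrMap z u conj C I (hcap I) ∘ₗ
            TensorProduct.map LinearMap.id (TensorProduct.map (f ∘ₗ g) LinearMap.id) ∘ₗ
            insMap z u conj D I (hcup I)) := by
      intro f g
      apply LinearMap.ext; intro v
      rw [LinearMap.comp_apply, Tval I f v, map_sum]
      calc ∑ x ∈ srep I,
            (contrMap z u conj C I (hcap I) ∘ₗ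
              TensorProduct.map LinearMap.id (TensorProduct.map g LinearMap.id) ∘ₗ
              insMap z u conj D I (hcup I))
              (u (C (conj I) I z ⟨0, hcap I⟩ (f x.2 ⊗ₜ[ℂ] v)) • x.1)
          = ∑ x ∈ srep I, u (C (conj I) I z ⟨0, hcap I⟩ (f x.2 ⊗ₜ[ℂ] v)) •
              ∑ y ∈ srep I, u (C (conj I) I z ⟨0, hcap I⟩ (g y.2 ⊗ₜ[ℂ] x.1)) • y.1 := by
            exact Finset.sum_congr rfl fun x _ => by rw [map_smul, Tval I g x.1]
        _ = ∑ y ∈ srep I,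
            (∑ x ∈ srep I, u (C (conj I) I z ⟨0, hcap I⟩ (g y.2 ⊗ₜ[ℂ] x.1)) *
              u (C (conj I) I z ⟨0, hcap I⟩ (f x.2 ⊗ₜ[ℂ] v))) • y.1 := by
            simp only [Finset.smul_sum, smul_smul]
            rw [Finset.sum_comm]
            refine Finset.sum_congr rfl fun y _ => ?_
            rw [Finset.sum_smul]
            exact Finset.sum_congr rfl fun x _ => by rw [mul_comm]
        _ = ∑ y ∈ srep I,
            (((κ I : ℂ))⁻¹ * u (C (conj I) I z ⟨0, hcap I⟩ (f (g y.2) ⊗ₜ[ℂ] v))) • y.1 := by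
            refine Finset.sum_congr rfl fun y _ => ?_
            congr 1
            calc ∑ x ∈ srep I, u (C (conj I) I z ⟨0, hcap I⟩ (g y.2 ⊗ₜ[ℂ] x.1)) *
                u (C (conj I) I z ⟨0, hcap I⟩ (f x.2 ⊗ₜ[ℂ] v))
                = u (C (conj I) I z ⟨0, hcap I⟩
                    (f (∑ x ∈ srep I, u (C (conj I) I z ⟨0, hcap I⟩ (g y.2 ⊗ₜ[ℂ] x.1)) • x.2)
                      ⊗ₜ[ℂ] v)) := by
                  rw [map_sum, TensorProduct.sum_tmul, map_sum, map_sum]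
                  exact Finset.sum_congr rfl fun x _ => by
                    rw [map_smul, ← TensorProduct.smul_tmul', map_smul, map_smul, smul_eq_mul]
              _ = ((κ I : ℂ))⁻¹ * u (C (conj I) I z ⟨0, hcap I⟩ (f (g y.2) ⊗ₜ[ℂ] v)) := by
                  rw [snake2 I (g y.2), map_smul, ← TensorProduct.smul_tmul', map_smul,
                    map_smul, smul_eq_mul]
        _ = (((κ I : ℂ))⁻¹ •
            (contrMap z u conj C I (hcap I) ∘ₗ
              TensorProduct.map LinearMap.id (TensorProduct.map (f ∘ₗ g) LinearMap.id) ∘ₗ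
              insMap z u conj D I (hcup I))) v := by
            rw [LinearMap.smul_apply, Tval I (f ∘ₗ g) v, Finset.smul_sum]
            exact Finset.sum_congr rfl fun y _ => by
              rw [smul_smul]; simp
    simp only [antipodeS, Pi.mul_apply, Module.End.mul_eq_comp]
    rw [LinearMap.smul_comp, LinearMap.comp_smul, key (ξ (conj I)) (η (conj I)),
      smul_smul, smul_smul]
    congr 1
    field_simp
  · -- left antipode relation
    intro ξ J
    apply LinearMap.ext; intro v
    rw [LinearMap.smul_apply, Tval' J (coprodComp C D ξ (conj J) J) v]
    have hterm : ∀ x ∈ srep J,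
        u (C (conj J) J z ⟨0, hcap J⟩ (coprodComp C D ξ (conj J) J (x.2 ⊗ₜ[ℂ] v))) • x.1
        = (u (ξ z (u.symm 1))) •
            (u (C (conj J) J z ⟨0, hcap J⟩ (x.2 ⊗ₜ[ℂ] v)) • x.1) := by
      intro x _
      rw [collapse1 (conj J) J (hcap J) ξ (x.2 ⊗ₜ[ℂ] v)]
      rw [smul_smul]
      congr 1
      conv_lhs => rw [hw (C (conj J) J z ⟨0, hcap J⟩ (x.2 ⊗ₜ[ℂ] v))]
      simp [map_smul, smul_eq_mul, mul_comm]
    rw [Finset.sum_congr rfl hterm, ← Finset.smul_sum, snake1 J v]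
    rw [smul_smul, smul_smul]
    simp only [LinearMap.smul_apply, LinearMap.id_apply]
    congr 1
    rw [mul_comm, ← mul_assoc, inv_mul_cancel₀ (hκC J), one_mul]
  · -- right antipode relation
    intro ξ J
    apply LinearMap.ext; intro v
    have hb : coprodComp C D ξ J (conj J) (cupElt z u conj D J (hcup J))
        = (u (ξ z (u.symm 1))) • cupElt z u conj D J (hcup J) := by
      simp only [cupElt]
      rw [collapse2 J (conj J) (hcup J) ξ (u.symm 1)]
      conv_lhs => rw [hw (ξ z (u.symm 1))]
      rw [map_smul]
    have hrec : (((TensorProduct.rid ℂ (V J)).toLinearMap ∘ₗ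
        TensorProduct.map LinearMap.id (u.toLinearMap ∘ₗ C (conj J) J z ⟨0, hcap J⟩) ∘ₗ
        (TensorProduct.assoc ℂ (V J) (V (conj J)) (V J)).toLinearMap ∘ₗ
        TensorProduct.map (coprodComp C D ξ J (conj J)) LinearMap.id ∘ₗ
        (TensorProduct.mk ℂ (V J ⊗[ℂ] V (conj J)) (V J)) (cupElt z u conj D J (hcup J)))) v
        = (u (ξ z (u.symm 1))) •
          ((contrMap z u conj C J (hcap J) ∘ₗ insMap z u conj D J (hcup J)) v) := by
      simp only [LinearMap.comp_apply, TensorProduct.mk_apply, TensorProduct.map_tmul,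
        LinearMap.id_apply, hb, TensorProduct.smul_tmul', map_smul, contrMap, insMap,
        LinearEquiv.coe_coe]
      rw [← TensorProduct.smul_tmul', map_smul, map_smul, map_smul]
    rw [LinearMap.smul_apply, hrec, hcc J]
    simp only [LinearMap.smul_apply, LinearMap.id_apply, smul_smul]
    congr 1
    rw [← mul_assoc, mul_comm ((κ J : ℂ)), mul_assoc, mul_inv_cancel₀ (hκC J), mul_one]
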